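/- Let k be a field of characteristic 2 and let m ≤ M be positive odd integers with M − m even. Write p = t^{−m}·∑_{i≥0} p_i t^i, q = t^{−M}·∑_{i≥0} q_i t^i, β = t^{−(M−m)/2}·∑_{i≥0} b_i t^i in k((t)) with p_0 ≠ 0, q_0 ≠ 0, b_0 ≠ 0, and let α = t^{(−M+1)/2}·∑_{i≥0} a_i t^i ∈ k((t)). Assume ordₜ(q + β²p + α² − α) ≥ −M + (m+1)/2. Set B := ⌊(2m+3)/4⌋ − ⌊(m+3)/4⌋, and define the truncations ᾱ := t^{(−M+1)/2}·∑_{i=0}^{B−1} a_i t^i and, for an integer j ≥ 0, β(j) := t^{−(M−m)/2}·∑_{i=0}^{j} b_i t^i. Then for every integer j with 0 ≤ j ≤ ⌊m/4⌋ − 1 one has ordₜ(q + β(j)²p + ᾱ² − ᾱ) ≥ −M + 2j + 2. -/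

import Mathlib

private lemma laurent_mul_vanish {k : Type*} [Field k] (x y : LaurentSeries k) (c d : ℤ)
    (hx : ∀ n : ℤ, n < c → x.coeff n = 0) (hy : ∀ n : ℤ, n < d → y.coeff n = 0) :
    ∀ n : ℤ, n < c + d → (x * y).coeff n = 0 := by
  intro n hn
  rw [HahnSeries.coeff_mul]
  apply Finset.sum_eq_zero
  intro ij hij
  rw [Finset.mem_addAntidiagonal] at hij
  obtain ⟨h1, h2, h3⟩ := hij
  rw [HahnSeries.mem_support] at h1 h2
  by_cases hc : ij.1 < c
  · exact absurd (hx _ hc) h1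
  · have : ij.2 < d := by omega
    exact absurd (hy _ this) h2

private lemma laurent_trunc_sub_vanish {k : Type*} [Field k] (x : LaurentSeries k) (s : ℤ)
    (N : ℕ) (hx : ∀ n : ℤ, n < s → x.coeff n = 0) :
    ∀ n : ℤ, n < s + N →
      ((∑ i ∈ Finset.range N, HahnSeries.single (s + (i : ℤ)) (x.coeff (s + (i : ℤ)))) - x).coeff n
        = 0 := by
  intro n hn
  rw [HahnSeries.coeff_sub]
  rw [show (∑ i ∈ Finset.range N,
        HahnSeries.single (s + (i : ℤ)) (x.coeff (s + (i : ℤ)))).coeff n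
      = ∑ i ∈ Finset.range N,
        (HahnSeries.single (s + (i : ℤ)) (x.coeff (s + (i : ℤ)))).coeff n from
    map_sum (HahnSeries.coeff.addMonoidHom n) _ _]
  by_cases h : n < s
  · rw [hx n h, Finset.sum_eq_zero, sub_zero]
    intro i _
    apply HahnSeries.coeff_single_of_ne
    omega
  · push_neg at h
    have hn' : n = s + ((n - s).toNat : ℤ) := by omega
    rw [Finset.sum_eq_single (n - s).toNat]
    · rw [← hn', HahnSeries.coeff_single_same, sub_self]
    · intro i _ hi
      apply HahnSeries.coeff_single_of_ne
      omega
    · intro hmem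
      rw [Finset.mem_range] at hmem
      omega

/-- With notation as in Statements 6/7 and
`B := ⌊(2m+3)/4⌋ − ⌊(m+3)/4⌋`, define the truncations
`ᾱ := t^{(−M+1)/2}·∑_{i<B} aᵢtⁱ` and `β(j) := t^{−(M−m)/2}·∑_{i≤j} bᵢtⁱ`.
Then for every `0 ≤ j ≤ ⌊m/4⌋ − 1` one has
`ordₜ(q + β(j)²p + ᾱ² − ᾱ) ≥ −M + 2j + 2`. -/
theorem laurent_truncation_order_bound
    (k : Type*) [Field k] (hchar : CharP k 2)
    (m M : ℤ) (hm : 0 < m) (hmM : m ≤ M) (hmodd : Odd m) (hModd : Odd M)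
    (heven : Even (M - m))
    (p q β α : LaurentSeries k)
    (hp0 : p.coeff (-m) ≠ 0) (hp : ∀ n : ℤ, n < -m → p.coeff n = 0)
    (hq0 : q.coeff (-M) ≠ 0) (hq : ∀ n : ℤ, n < -M → q.coeff n = 0)
    (hβ0 : β.coeff (-((M - m) / 2)) ≠ 0)
    (hβ : ∀ n : ℤ, n < -((M - m) / 2) → β.coeff n = 0)
    (hα : ∀ n : ℤ, n < (-M + 1) / 2 → α.coeff n = 0)
    (hyp : ∀ n : ℤ, n < -M + (m + 1) / 2 → (q + β ^ 2 * p + α ^ 2 - α).coeff n = 0)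
    (αbar : LaurentSeries k)
    (hαbar : αbar =
      ∑ i ∈ Finset.range ((( (2 * m + 3) / 4 - (m + 3) / 4 : ℤ)).toNat),
        HahnSeries.single ((-M + 1) / 2 + (i : ℤ)) (α.coeff ((-M + 1) / 2 + (i : ℤ))))
    (βtr : ℕ → LaurentSeries k)
    (hβtr : ∀ j : ℕ, βtr j =
      ∑ i ∈ Finset.range (j + 1),
        HahnSeries.single (-((M - m) / 2) + (i : ℤ)) (β.coeff (-((M - m) / 2) + (i : ℤ)))) :
    ∀ j : ℕ, (j : ℤ) ≤ m / 4 - 1 →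
      ∀ n : ℤ, n < -M + 2 * (j : ℤ) + 2 →
        (q + (βtr j) ^ 2 * p + αbar ^ 2 - αbar).coeff n = 0 := by
  haveI := hchar
  have hmo : m % 2 = 1 := Int.odd_iff.mp hmodd
  have hMo : M % 2 = 1 := Int.odd_iff.mp hModd
  have hev : (M - m) % 2 = 0 := Int.even_iff.mp heven
  -- char two facts
  have h2 : ∀ z : LaurentSeries k, z + z = 0 := by
    intro z
    ext n
    rw [HahnSeries.coeff_add, HahnSeries.coeff_zero, ← two_mul]
    have : (2 : k) = 0 := by
      have := hchar.cast_eq_zero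
      exact_mod_cast this
    rw [this, zero_mul]
  have hsq : ∀ x y : LaurentSeries k, (x - y) ^ 2 = x ^ 2 - y ^ 2 := by
    intro x y
    have hyy : -(y ^ 2) = y ^ 2 := neg_eq_of_add_eq_zero_right (h2 (y ^ 2))
    have h2xy : x * y + x * y = 0 := h2 (x * y)
    calc (x - y) ^ 2 = x ^ 2 - (x * y + x * y) + y ^ 2 := by ring
      _ = x ^ 2 + y ^ 2 := by rw [h2xy]; ring
      _ = x ^ 2 - y ^ 2 := by rw [sub_eq_add_neg, hyy]
  intro j hj n hn
  -- key algebraic identity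
  have key : q + (βtr j) ^ 2 * p + αbar ^ 2 - αbar
      = (q + β ^ 2 * p + α ^ 2 - α)
        + (((βtr j - β) ^ 2) * p + (αbar - α) ^ 2 - (αbar - α)) := by
    rw [hsq (βtr j) β, hsq αbar α]; ring
  have H1 : (q + β ^ 2 * p + α ^ 2 - α).coeff n = 0 := by
    apply hyp; omega
  -- β truncation difference
  have hβd : ∀ n' : ℤ, n' < -((M - m) / 2) + ((j + 1 : ℕ) : ℤ) → (βtr j - β).coeff n' = 0 := by
    intro n' hn'
    rw [hβtr j]
    exact laurent_trunc_sub_vanish β (-((M - m) / 2)) (j + 1) hβ n' hn'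
  have H2 : (((βtr j - β) ^ 2) * p).coeff n = 0 := by
    have hsqv : ∀ n' : ℤ, n' < (-((M - m) / 2) + ((j + 1 : ℕ) : ℤ))
        + (-((M - m) / 2) + ((j + 1 : ℕ) : ℤ)) → ((βtr j - β) ^ 2).coeff n' = 0 := by
      rw [sq]
      exact laurent_mul_vanish _ _ _ _ hβd hβd
    refine laurent_mul_vanish _ _ _ (-m) hsqv hp n ?_
    push_cast
    omega
  -- α truncation difference
  set B : ℕ := ((2 * m + 3) / 4 - (m + 3) / 4 : ℤ).toNat with hB
  have hαd : ∀ n' : ℤ, n' < (-M + 1) / 2 + (B : ℤ) → (αbar - α).coeff n' = 0 := by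
    intro n' hn'
    rw [hαbar]
    exact laurent_trunc_sub_vanish α ((-M + 1) / 2) B hα n' hn'
  have H3 : ((αbar - α) ^ 2).coeff n = 0 := by
    rw [sq]
    refine laurent_mul_vanish _ _ _ _ hαd hαd n ?_
    have hBc : (B : ℤ) = (2 * m + 3) / 4 - (m + 3) / 4 := by omega
    omega
  have H4 : (αbar - α).coeff n = 0 := by
    refine hαd n ?_
    have hBc : (B : ℤ) = (2 * m + 3) / 4 - (m + 3) / 4 := by omega
    omega
  rw [key, HahnSeries.coeff_add, H1, HahnSeries.coeff_sub, HahnSeries.coeff_add, H2, H3, H4]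
  ring
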